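/- For every x ≥ 0, log(1 + x) = ∫₀^∞ (e^{−z} − e^{−z(1+x)})/z dz, where log is the natural logarithm. -/

import Mathlib

open Real MeasureTheory Set

lemma inner_t {z : ℝ} (hz : 0 < z) (a : ℝ) (ha : 1 ≤ a) :
    ∫ t in Set.Ioc 1 a, Real.exp (-(z * t)) = (Real.exp (-z) - Real.exp (-(z * a))) / z := by
  have h1 : ∫ t in Set.Ioc 1 a, Real.exp (-(z * t)) = ∫ t in (1:ℝ)..a, Real.exp (-(z * t)) := by
    rw [intervalIntegral.integral_of_le ha]
  rw [h1]
  have h2 := intervalIntegral.integral_comp_mul_left (a := (1:ℝ)) (b := a)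
      (fun u => Real.exp (-u)) (c := z) (ne_of_gt hz)
  have h3 := intervalIntegral.integral_comp_neg (a := z * 1) (b := z * a) (fun u => Real.exp u)
  rw [h2, h3, integral_exp, smul_eq_mul, mul_one]
  field_simp

lemma inner_z {t : ℝ} (ht : 0 < t) :
    ∫ z in Set.Ioi (0:ℝ), Real.exp (-(z * t)) = 1 / t := by
  have := integral_comp_mul_right_Ioi (fun u => Real.exp (-u)) 0 ht
  simp only [zero_mul, smul_eq_mul] at this
  rw [this, integral_exp_neg_Ioi, neg_zero, Real.exp_zero, mul_one, one_div]

theorem stmt_10 (x : ℝ) (hx : 0 ≤ x) :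
    Real.log (1 + x)
      = ∫ z in Set.Ioi (0:ℝ), (Real.exp (-z) - Real.exp (-z * (1 + x))) / z := by
  set a : ℝ := 1 + x with ha_def
  have ha : 1 ≤ a := by simp [ha_def, hx]
  have ha0 : (0:ℝ) < a := lt_of_lt_of_le one_pos ha
  have hmeas : AEStronglyMeasurable (fun p : ℝ × ℝ => Real.exp (-(p.1 * p.2)))
      ((volume.restrict (Set.Ioi (0:ℝ))).prod (volume.restrict (Set.Ioc (1:ℝ) a))) :=
    Continuous.aestronglyMeasurable (by continuity)
  have hexp : Integrable (fun z : ℝ => Real.exp (-z)) (volume.restrict (Set.Ioi (0:ℝ))) := by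
    have := exp_neg_integrableOn_Ioi 0 one_pos
    exact this.congr (by filter_upwards with y; simp [neg_one_mul])
  have hg : Integrable (fun p : ℝ × ℝ => Real.exp (-p.1) * 1)
      ((volume.restrict (Set.Ioi (0:ℝ))).prod (volume.restrict (Set.Ioc (1:ℝ) a))) :=
    Integrable.mul_prod hexp (integrable_const 1)
  have hint : Integrable (fun p : ℝ × ℝ => Real.exp (-(p.1 * p.2)))
      ((volume.restrict (Set.Ioi (0:ℝ))).prod (volume.restrict (Set.Ioc (1:ℝ) a))) := by
    refine hg.mono hmeas ?_
    have h1 : ∀ᵐ p : ℝ × ℝ ∂((volume.restrict (Set.Ioi (0:ℝ))).prod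
        (volume.restrict (Set.Ioc (1:ℝ) a))),
        p ∈ (Set.Ioi (0:ℝ)) ×ˢ (Set.Ioc (1:ℝ) a) := by
      rw [Measure.ae_prod_mem_iff_ae_ae_mem (measurableSet_Ioi.prod measurableSet_Ioc)]
      filter_upwards [ae_restrict_mem measurableSet_Ioi] with z hz
      filter_upwards [ae_restrict_mem measurableSet_Ioc] with t ht
      exact ⟨hz, ht⟩
    filter_upwards [h1] with p hp
    rcases hp with ⟨hz, ht⟩
    rw [Real.norm_eq_abs, Real.norm_eq_abs, abs_of_pos (Real.exp_pos _), mul_one,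
      abs_of_pos (Real.exp_pos _)]
    apply Real.exp_le_exp.2
    simp only [neg_le_neg_iff]
    nlinarith [hz.out, ht.1]
  have hswap := MeasureTheory.integral_integral_swap
      (f := fun z t => Real.exp (-(z * t))) hint
  have hlhs : (∫ z in Set.Ioi (0:ℝ), ∫ t in Set.Ioc (1:ℝ) a, Real.exp (-(z * t)))
      = ∫ z in Set.Ioi (0:ℝ), (Real.exp (-z) - Real.exp (-z * a)) / z := by
    apply setIntegral_congr_fun measurableSet_Ioi
    intro z hz
    simp only
    rw [inner_t hz a ha]
    simp [neg_mul]
  have hrhs : (∫ t in Set.Ioc (1:ℝ) a, ∫ z in Set.Ioi (0:ℝ), Real.exp (-(z * t)))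
      = Real.log a := by
    have h2 : (∫ t in Set.Ioc (1:ℝ) a, ∫ z in Set.Ioi (0:ℝ), Real.exp (-(z * t)))
        = ∫ t in Set.Ioc (1:ℝ) a, 1 / t := by
      apply setIntegral_congr_fun measurableSet_Ioc
      intro t ht
      exact inner_z (lt_trans one_pos ht.1)
    rw [h2, ← intervalIntegral.integral_of_le ha, integral_one_div, div_one]
    intro h
    rw [Set.uIcc_of_le ha] at h
    exact absurd h.1 (by norm_num)
  rw [← hlhs, hswap, hrhs]
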